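/- If Q·U(w₁,t₁)·Q^{-1} = U(w₂,t₂) for some isometry Q of H of the block-triangular form above (with scaling parameter α > 0), then w₂^*Kw₂ = α²·w₁^*Kw₁; consequently, if w₁^*K₁w₁ is a nonzero integer, a vertical translation length t₁' is a nonzero integer, while after conjugation w₂^*Kw₂ ∈ ℤ and t₂' ∈ √3·ℤ, then the scaling factor λ = α² satisfies both λ ∈ ℚ and λ·t₁' ∈ √3·ℤ \ {0}, which is a contradiction (λ ∈ ℚ and λ ∉ ℚ). -/

import Mathlib

open Matrix
open scoped ComplexOrder

/-- Index type for the block decomposition `1 + 2 + 1` of `ℂ⁴`. -/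
abbrev Idx : Type := Unit ⊕ Fin 2 ⊕ Unit

/-- The parabolic matrix `P(B,w,t) = [[1, -w^*KB, -½w^*Kw+it],[0,B,w],[0,0,1]]`. -/
noncomputable def heisP (K B : Matrix (Fin 2) (Fin 2) ℂ) (w : Fin 2 → ℂ) (t : ℝ) :
    Matrix Idx Idx ℂ :=
  fun i j => match i, j with
  | Sum.inl _, Sum.inl _ => 1
  | Sum.inl _, Sum.inr (Sum.inl b) => -(Matrix.vecMul (star w) (K * B) b)
  | Sum.inl _, Sum.inr (Sum.inr _) =>
      -(1/2) * (star w ⬝ᵥ K.mulVec w) + (t : ℂ) * Complex.I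
  | Sum.inr (Sum.inl a), Sum.inr (Sum.inl b) => B a b
  | Sum.inr (Sum.inl a), Sum.inr (Sum.inr _) => w a
  | Sum.inr (Sum.inr _), Sum.inr (Sum.inr _) => 1
  | _, _ => 0

/-- The Heisenberg translation `U(w,t) = P(Id,w,t)`. -/
noncomputable def heisU (K : Matrix (Fin 2) (Fin 2) ℂ) (w : Fin 2 → ℂ) (t : ℝ) :
    Matrix Idx Idx ℂ :=
  heisP K 1 w t

/-- The block-triangular isometry `Q = [[α, -αv^*KC, -½αv^*Kv+is],[0,C,v],[0,0,1/α]]`. -/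
noncomputable def heisQ (K C : Matrix (Fin 2) (Fin 2) ℂ) (v : Fin 2 → ℂ) (α s : ℝ) :
    Matrix Idx Idx ℂ :=
  fun i j => match i, j with
  | Sum.inl _, Sum.inl _ => (α : ℂ)
  | Sum.inl _, Sum.inr (Sum.inl b) => -(α : ℂ) * Matrix.vecMul (star v) (K * C) b
  | Sum.inl _, Sum.inr (Sum.inr _) =>
      -(1/2) * (α : ℂ) * (star v ⬝ᵥ K.mulVec v) + (s : ℂ) * Complex.I
  | Sum.inr (Sum.inl a), Sum.inr (Sum.inl b) => C a b
  | Sum.inr (Sum.inl a), Sum.inr (Sum.inr _) => v a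
  | Sum.inr (Sum.inr _), Sum.inr (Sum.inr _) => 1 / (α : ℂ)
  | _, _ => 0

lemma heisQ_eq_fromBlocks (K C : Matrix (Fin 2) (Fin 2) ℂ) (v : Fin 2 → ℂ) (α s : ℝ) :
    heisQ K C v α s = Matrix.fromBlocks
      (Matrix.of fun _ _ => (α : ℂ))
      (Matrix.of fun _ j => Sum.elim
        (fun b => -(α : ℂ) * Matrix.vecMul (star v) (K * C) b)
        (fun _ => -(1/2) * (α : ℂ) * (star v ⬝ᵥ K.mulVec v) + (s : ℂ) * Complex.I) j)
      0
      (Matrix.fromBlocks C (Matrix.of fun a _ => v a) 0 (Matrix.of fun _ _ => 1 / (α : ℂ))) := by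
  funext i j
  rcases i with i | a | i <;> rcases j with j | b | j <;>
    simp [heisQ, Matrix.fromBlocks]

lemma heisQ_det (K C : Matrix (Fin 2) (Fin 2) ℂ) (v : Fin 2 → ℂ) (α s : ℝ) (hα : (α : ℂ) ≠ 0) :
    (heisQ K C v α s).det = C.det := by
  rw [heisQ_eq_fromBlocks]
  simp only [Matrix.det_fromBlocks_zero₂₁, Matrix.det_unique, Matrix.of_apply]
  field_simp

lemma key_norm (K C : Matrix (Fin 2) (Fin 2) ℂ) (hC : Cᴴ * K * C = K) (w : Fin 2 → ℂ) :
    star (C.mulVec w) ⬝ᵥ K.mulVec (C.mulVec w) = star w ⬝ᵥ K.mulVec w := by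
  rw [Matrix.star_mulVec, Matrix.mulVec_mulVec, Matrix.dotProduct_mulVec,
    Matrix.vecMul_vecMul, ← Matrix.mul_assoc, hC, ← Matrix.dotProduct_mulVec]

/-- If `Q U(w₁,t₁) Q⁻¹ = U(w₂,t₂)` then `w₂^*Kw₂ = α² w₁^*Kw₁`; consequently the
incommensurability data (integral horizontal norms and vertical lengths on one side,
integral horizontal norms and vertical lengths in `√3·ℤ` on the other) is
contradictory. -/
theorem cusp_incommensurability (K : Matrix (Fin 2) (Fin 2) ℂ) (hK : K.PosDef)
    (C : Matrix (Fin 2) (Fin 2) ℂ) (hC : Cᴴ * K * C = K)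
    (v : Fin 2 → ℂ) (α s : ℝ) (hα : 0 < α)
    (w₁ w₂ : Fin 2 → ℂ) (t₁ t₂ : ℝ)
    (h₁ : heisQ K C v α s * heisU K w₁ t₁ * (heisQ K C v α s)⁻¹ = heisU K w₂ t₂) :
    star w₂ ⬝ᵥ K.mulVec w₂ = ((α ^ 2 : ℝ) : ℂ) * (star w₁ ⬝ᵥ K.mulVec w₁) ∧
    (∀ t₁' t₂' : ℝ,
      heisQ K C v α s * heisU K 0 t₁' * (heisQ K C v α s)⁻¹ = heisU K 0 t₂' →
      (∃ n : ℤ, n ≠ 0 ∧ star w₁ ⬝ᵥ K.mulVec w₁ = (n : ℂ)) →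
      (∃ n : ℤ, n ≠ 0 ∧ t₁' = (n : ℝ)) →
      (∃ n : ℤ, star w₂ ⬝ᵥ K.mulVec w₂ = (n : ℂ)) →
      (∃ n : ℤ, n ≠ 0 ∧ t₂' = Real.sqrt 3 * (n : ℝ)) →
      False) := by
  have hαC : (α : ℂ) ≠ 0 := by
    exact_mod_cast Complex.ofReal_ne_zero.mpr hα.ne'
  have hdetK : K.det ≠ 0 := hK.det_pos.ne'
  -- det C is a unit
  have hCC : star C.det * C.det * K.det = 1 * K.det := by
    have h := congrArg Matrix.det hC
    rw [Matrix.det_mul, Matrix.det_mul, Matrix.det_conjTranspose] at h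
    ring_nf
    ring_nf at h
    linear_combination h
  have hCdet1 : star C.det * C.det = 1 := mul_right_cancel₀ hdetK hCC
  have hQdet : IsUnit (heisQ K C v α s).det := by
    rw [heisQ_det K C v α s hαC]
    exact IsUnit.of_mul_eq_one _ (by rw [mul_comm]; exact hCdet1)
  -- turn conjugation into an intertwining relation
  have intertwine : ∀ (w₁' w₂' : Fin 2 → ℂ) (t₁' t₂' : ℝ),
      heisQ K C v α s * heisU K w₁' t₁' * (heisQ K C v α s)⁻¹ = heisU K w₂' t₂' →
      heisQ K C v α s * heisU K w₁' t₁' = heisU K w₂' t₂' * heisQ K C v α s := by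
    intro w₁' w₂' t₁' t₂' h
    have h' := congrArg (fun M => M * heisQ K C v α s) h
    simp only [Matrix.mul_assoc] at h'
    rwa [Matrix.nonsing_inv_mul _ hQdet, Matrix.mul_one] at h'
  have hQU := intertwine w₁ w₂ t₁ t₂ h₁
  -- horizontal component
  have hw : w₂ = fun a => (α : ℂ) * (C.mulVec w₁) a := by
    funext a
    have h := congrFun (congrFun hQU (Sum.inr (Sum.inl a))) (Sum.inr (Sum.inr ()))
    fin_cases a <;>
    · simp [Matrix.mul_apply, Fintype.sum_sum_type, Fin.sum_univ_two, heisQ, heisU, heisP,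
        Matrix.one_apply, Matrix.mulVec, dotProduct] at h ⊢
      field_simp at h
      linear_combination -h
  have part1 : star w₂ ⬝ᵥ K.mulVec w₂ = ((α ^ 2 : ℝ) : ℂ) * (star w₁ ⬝ᵥ K.mulVec w₁) := by
    have hsm : w₂ = (α : ℂ) • C.mulVec w₁ := by
      rw [hw]; rfl
    rw [hsm, star_smul, Matrix.mulVec_smul, smul_dotProduct, dotProduct_smul,
      key_norm K C hC w₁]
    simp [Complex.star_def, Complex.conj_ofReal, smul_smul]
    ring
  refine ⟨part1, ?_⟩
  intro t₁' t₂' h' ⟨n₁, hn₁, hwn₁⟩ ⟨n₃, hn₃, ht₁'⟩ ⟨m, hm⟩ ⟨n₄, hn₄, ht₂'⟩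
  have hQU' := intertwine 0 0 t₁' t₂' h'
  -- vertical component: t₂' = α² t₁'
  have hvert : t₂' = α ^ 2 * t₁' := by
    have h := congrFun (congrFun hQU' (Sum.inl ())) (Sum.inr (Sum.inr ()))
    simp [Matrix.mul_apply, Fintype.sum_sum_type, Fin.sum_univ_two, heisQ, heisU, heisP,
      Matrix.one_apply, Matrix.mulVec, dotProduct] at h
    have h2 : ((t₂' : ℂ)) * Complex.I = ((α ^ 2 * t₁' : ℝ) : ℂ) * Complex.I := by
      push_cast
      field_simp at h
      linear_combination (-1/2 : ℂ) * h
    have h3 := mul_right_cancel₀ Complex.I_ne_zero h2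
    exact_mod_cast h3
  -- α² = m / n₁ is rational
  have hmn : (m : ℝ) = α ^ 2 * (n₁ : ℝ) := by
    have : ((m : ℝ) : ℂ) = ((α ^ 2 * (n₁ : ℝ) : ℝ) : ℂ) := by
      push_cast
      rw [← hm, part1, hwn₁]
      push_cast
      ring
    exact_mod_cast this
  have hn₁R : (n₁ : ℝ) ≠ 0 := Int.cast_ne_zero.mpr hn₁
  have hn₄R : (n₄ : ℝ) ≠ 0 := Int.cast_ne_zero.mpr hn₄
  have hsqrt : Real.sqrt 3 = ((((m * n₃ : ℤ) : ℚ) / ((n₁ * n₄ : ℤ) : ℚ) : ℚ) : ℝ) := by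
    have hα2 : α ^ 2 = (m : ℝ) / (n₁ : ℝ) := by
      field_simp [hmn]
      linarith
    rw [ht₂', ht₁', hα2] at hvert
    push_cast
    field_simp at hvert ⊢
    linear_combination hvert
  have h3 : Irrational (Real.sqrt 3) := by
    have := (Nat.prime_three).irrational_sqrt
    simpa using this
  exact h3 ⟨_, hsqrt.symm⟩
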